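/- arXiv:2110.07338 — 9 statements merged into one kernel-verified Lean document; each statement's English description precedes it below -/
import Mathlib

section
/- Let n be a unit vector in ℝ³ and let v, a ∈ ℝ³ with 1 + n·v ≠ 0. Then n·a = (((1 − ‖v‖²)/(1 + n·v))·n + v)·a + (v · (n × ((n + v) × a)))/(1 + n·v). -/
/-- The cross product on `ℝ³ = EuclideanSpace ℝ (Fin 3)`. -/
noncomputable def cross3 (a b : EuclideanSpace ℝ (Fin 3)) : EuclideanSpace ℝ (Fin 3) :=
  (WithLp.equiv 2 (Fin 3 → ℝ)).symm
    (crossProduct ((WithLp.equiv 2 (Fin 3 → ℝ)) a) ((WithLp.equiv 2 (Fin 3 → ℝ)) b))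

/-- The unfolding identity displaying the rank deficiency: for a unit vector `n`
and vectors `v, a` with `1 + n·v ≠ 0`, writing `R̂ = ((1 − ‖v‖²)/(1 + n·v)) • n + v`,
`n·a = R̂·a + (v · (n × ((n + v) × a)))/(1 + n·v)`. -/
theorem unfolding_identity
    (n v a : EuclideanSpace ℝ (Fin 3)) (hn : ‖n‖ = 1)
    (hden : 1 + (inner ℝ n v : ℝ) ≠ 0) :
    (inner ℝ n a : ℝ) =
      (inner ℝ (((1 - ‖v‖ ^ 2) / (1 + (inner ℝ n v : ℝ))) • n + v) a : ℝ) +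
        (inner ℝ v (cross3 n (cross3 (n + v) a)) : ℝ) / (1 + (inner ℝ n v : ℝ)) := by
  have hn2 : n 0 ^ 2 + n 1 ^ 2 + n 2 ^ 2 = 1 := by
    have h : ‖n‖ ^ 2 = 1 := by rw [hn]; norm_num
    rw [EuclideanSpace.norm_eq, Real.sq_sqrt (by positivity)] at h
    simpa [Fin.sum_univ_three, sq] using h
  have hv : ‖v‖ ^ 2 = v 0 ^ 2 + v 1 ^ 2 + v 2 ^ 2 := by
    rw [EuclideanSpace.norm_eq, Real.sq_sqrt (by positivity)]
    simp [Fin.sum_univ_three, sq]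
  simp only [cross3, crossProduct, PiLp.inner_apply, Fin.sum_univ_three, hv,
    WithLp.equiv_symm_apply, WithLp.equiv_apply, PiLp.toLp_apply, PiLp.add_apply, PiLp.smul_apply,
    LinearMap.mk₂_apply, Matrix.cons_val_zero, Matrix.cons_val_one, Matrix.head_cons,
    Matrix.cons_val_fin_one, Matrix.cons_val_two, Matrix.tail_cons, smul_eq_mul,
    RCLike.inner_apply, conj_trivial] at *
  have hden' : 1 + (n 0 * v 0 + n 1 * v 1 + n 2 * v 2) ≠ 0 := by
    convert hden using 1; ring
  field_simp
  linear_combination (v 0 * a 0 + v 1 * a 1 + v 2 * a 2) * hn2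
end

section
/- Let k, u, F ∈ ℝ³ with k·u ≠ 0, let c ∈ ℝ, and set Λ := F + c·u. Then F = ((k·F)/(k·u))·u − (k × (u × Λ))/(k·u). -/
/-- Abstract reconstruction formula: if `k·u ≠ 0` and `Λ = F + c • u`, then
`F = ((k·F)/(k·u)) • u − (k × (u × Λ))/(k·u)`. -/
theorem reconstruction_from_past_data
    (k u F : EuclideanSpace ℝ (Fin 3)) (c : ℝ)
    (hku : (inner ℝ k u : ℝ) ≠ 0)
    (Λ : EuclideanSpace ℝ (Fin 3)) (hΛ : Λ = F + c • u) :
    F = ((inner ℝ k F : ℝ) / (inner ℝ k u : ℝ)) • u -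
        (1 / (inner ℝ k u : ℝ)) • cross3 k (cross3 u Λ) := by
  subst hΛ
  have hinner : ∀ a b : EuclideanSpace ℝ (Fin 3),
      (inner ℝ a b : ℝ) = a 0 * b 0 + a 1 * b 1 + a 2 * b 2 := by
    intro a b
    simp [PiLp.inner_apply, Fin.sum_univ_three, mul_comm]
  rw [hinner, hinner] at *
  ext i
  fin_cases i <;>
    simp [cross3, crossProduct, PiLp.smul_apply, PiLp.sub_apply, PiLp.add_apply,
      Matrix.cons_val_zero, Matrix.cons_val_one, smul_eq_mul] <;>
    field_simp <;> ring
end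

section
/- Let n be a unit vector in ℝ³, let v ∈ ℝ³ with ‖v‖ < 1, and let E ∈ ℝ³. Define F := (1 + n·v)·E − (v·E)·(n + v). Then (1 + n·v)·E = (1/(1 − ‖v‖²))·(F + (v·F)·n + v × (v × F)). -/
/-- Inversion of the electromagnetic acceleration form: for a unit vector `n`,
`‖v‖ < 1`, and `F = (1 + n·v) • E − (v·E) • (n + v)`, one recovers
`(1 + n·v) • E = (1/(1 − ‖v‖²)) • (F + (v·F) • n + v × (v × F))`. -/
theorem electric_field_recovery
    (n v E : EuclideanSpace ℝ (Fin 3)) (hn : ‖n‖ = 1) (hv : ‖v‖ < 1)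
    (F : EuclideanSpace ℝ (Fin 3))
    (hF : F = (1 + (inner ℝ n v : ℝ)) • E - (inner ℝ v E : ℝ) • (n + v)) :
    (1 + (inner ℝ n v : ℝ)) • E =
      (1 / (1 - ‖v‖ ^ 2)) • (F + (inner ℝ v F : ℝ) • n + cross3 v (cross3 v F)) := by
  have h1 : (1 : ℝ) - ‖v‖ ^ 2 ≠ 0 := by
    have : ‖v‖ ^ 2 < 1 := by nlinarith [norm_nonneg v]
    linarith
  have hvv : ‖v‖ ^ 2 = v 0 ^ 2 + v 1 ^ 2 + v 2 ^ 2 := by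
    rw [← real_inner_self_eq_norm_sq]
    simp only [PiLp.inner_apply, RCLike.inner_apply, conj_trivial, Fin.sum_univ_three]
    ring
  subst hF
  rw [one_div, eq_comm, inv_smul_eq_iff₀ h1]
  ext i
  simp only [PiLp.inner_apply, RCLike.inner_apply, starRingEnd_apply, star_trivial,
    Fin.sum_univ_three, cross3, crossProduct, Matrix.cons_val_zero, Matrix.cons_val_one,
    Matrix.head_cons, LinearMap.mk₂_apply, WithLp.equiv_symm_apply, WithLp.equiv_apply,
    PiLp.smul_apply, PiLp.add_apply, PiLp.sub_apply, smul_eq_mul, hvv]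
  fin_cases i <;>
    simp [Matrix.cons_val_zero, Matrix.cons_val_one, Matrix.head_cons] <;> ring
end

section
/- Let ρ, q ∈ ℝ³ and ε, γ ∈ ℝ. Set D := 1 + ε²γ²‖q‖², B := εγ(q·ρ)/D, and C := (1 − ‖ρ‖²)/D. Then B² + C > 0 if and only if ‖ρ‖² < 1 + ε²γ²‖q‖² + ε²γ²((q·ρ)² − ‖ρ‖²‖q‖²). -/
/-- The extended subluminality bound of Lemma 4.2: with
`D = 1 + ε²γ²‖q‖²`, `B = εγ(q·ρ)/D` and `C = (1 − ‖ρ‖²)/D`, one has `B² + C > 0`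
if and only if `‖ρ‖² < 1 + ε²γ²‖q‖² + ε²γ²((q·ρ)² − ‖ρ‖²‖q‖²)`. -/
theorem asymmetric_paraboloid_bound
    (ρ q : EuclideanSpace ℝ (Fin 3)) (ε γ : ℝ)
    (D B C : ℝ)
    (hD : D = 1 + ε ^ 2 * γ ^ 2 * ‖q‖ ^ 2)
    (hB : B = ε * γ * (inner ℝ q ρ : ℝ) / D)
    (hC : C = (1 - ‖ρ‖ ^ 2) / D) :
    0 < B ^ 2 + C ↔
      ‖ρ‖ ^ 2 < 1 + ε ^ 2 * γ ^ 2 * ‖q‖ ^ 2 +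
        ε ^ 2 * γ ^ 2 * ((inner ℝ q ρ : ℝ) ^ 2 - ‖ρ‖ ^ 2 * ‖q‖ ^ 2) := by
  have hD0 : 0 < D := by rw [hD]; positivity
  have key : B ^ 2 + C =
      (ε ^ 2 * γ ^ 2 * (inner ℝ q ρ : ℝ) ^ 2 + D * (1 - ‖ρ‖ ^ 2)) / D ^ 2 := by
    rw [hB, hC]
    field_simp
  rw [key, lt_div_iff₀ (by positivity)]
  constructor <;> intro h <;> nlinarith [h, hD0]
end

section
/- Let M_i, M_k > 0, let σ ∈ {−1, 1}, and let φ_i, φ_k ∈ ℝ satisfy M_i·sinh(φ_i) = −σ·cosh(φ_k)·sinh(φ_k) and M_k·sinh(φ_k) = −σ·cosh(φ_i)·sinh(φ_i). Then: (a) if σ = −1 then sinh(φ_i)·sinh(φ_k) ≥ 0 (the velocities point in the same direction: a sticky collision); (b) if σ = 1 then sinh(φ_i)·sinh(φ_k) ≤ 0 (the velocities are opposite: a mutual recoil). -/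
open Real

/-- **Lemma 5.1** (symmetric collisions of pure electrodynamics): if the scaled
masses `M_i, M_k > 0` and the charge product `σ = ±1` satisfy the symmetric
Weierstrass–Erdmann conditions `M_i sinh φ_i = −σ cosh φ_k sinh φ_k` and
`M_k sinh φ_k = −σ cosh φ_i sinh φ_i`, then the collision is sticky
(`sinh φ_i · sinh φ_k ≥ 0`) in the attractive case `σ = −1`, and a mutual recoil
(`sinh φ_i · sinh φ_k ≤ 0`) in the repulsive case `σ = 1`. -/
theorem symmetric_collision_eps_zero
    (Mi Mk σ φi φk : ℝ) (hMi : 0 < Mi) (hMk : 0 < Mk)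
    (hσ : σ = -1 ∨ σ = 1)
    (h1 : Mi * sinh φi = -σ * cosh φk * sinh φk)
    (h2 : Mk * sinh φk = -σ * cosh φi * sinh φi) :
    (σ = -1 → 0 ≤ sinh φi * sinh φk) ∧
    (σ = 1 → sinh φi * sinh φk ≤ 0) := by
  constructor <;> intro hs <;> subst hs <;>
  · have h3 := congrArg (· * sinh φk) h1
    nlinarith [mul_nonneg (cosh_pos φk).le (sq_nonneg (sinh φk))]
end

section
/- Let M_i, M_k > 0, let σ ∈ {−1, 1}, and let φ_i, φ_k ∈ ℝ with sinh(φ_k) ≠ 0 satisfy M_i·sinh(φ_i) = −σ·cosh(φ_k)·sinh(φ_k) and M_k·sinh(φ_k) = −σ·cosh(φ_i)·sinh(φ_i). Then M_i·cosh(φ_i)·(cosh(φ_i)² − 1) = M_k·cosh(φ_k)·(cosh(φ_k)² − 1). -/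
open Real

/-- The cubic relation `M_i γ_i(γ_i² − 1) = M_k γ_k(γ_k² − 1)` from the proof of
Lemma 5.1, with `γ_α = cosh φ_α`. -/
theorem symmetric_collision_cubic
    (Mi Mk σ φi φk : ℝ) (hMi : 0 < Mi) (hMk : 0 < Mk)
    (hσ : σ = -1 ∨ σ = 1) (hk : sinh φk ≠ 0)
    (h1 : Mi * sinh φi = -σ * cosh φk * sinh φk)
    (h2 : Mk * sinh φk = -σ * cosh φi * sinh φi) :
    Mi * cosh φi * (cosh φi ^ 2 - 1) = Mk * cosh φk * (cosh φk ^ 2 - 1) := by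
  have ei : cosh φi ^ 2 - 1 = sinh φi ^ 2 := by rw [Real.cosh_sq]; ring
  have ek : cosh φk ^ 2 - 1 = sinh φk ^ 2 := by rw [Real.cosh_sq]; ring
  rw [ei, ek]
  linear_combination sinh φi * cosh φi * h1 - cosh φk * sinh φk * h2
end

section
/- Let M_i, M_k > 0 and let ε ∈ ℝ with |ε| < 2. Suppose φ_i, φ_k ∈ ℝ satisfy (M_i + (ε/2)·cosh(φ_k))·sinh(φ_i) = (cosh(φ_k) − (ε/2)·cosh(φ_i))·sinh(φ_k) and (M_k + (ε/2)·cosh(φ_i))·sinh(φ_k) = (cosh(φ_i) − (ε/2)·cosh(φ_k))·sinh(φ_i). Then sinh(φ_i)·sinh(φ_k) ≥ 0 (the collision is sticky, not a mutual recoil). -/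
open Real

set_option maxHeartbeats 1000000 in
private lemma ep_aux (Mi Mk c a b s t : ℝ) (hMi : 0 < Mi) (hMk : 0 < Mk)
    (hcl : -1 < c) (hcr : c < 1) (ha : 1 ≤ a) (hb : 1 ≤ b)
    (h1 : (Mi + c * b) * s = (b - c * a) * t)
    (h2 : (Mk + c * a) * t = (a - c * b) * s) :
    0 ≤ s * t := by
  by_contra h
  push_neg at h
  have h1t : (Mi + c * b) * (s * t) = (b - c * a) * t ^ 2 := by
    linear_combination t * h1
  have h2s : (Mk + c * a) * (s * t) = (a - c * b) * s ^ 2 := by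
    linear_combination s * h2
  have hsne : s ≠ 0 := fun h0 => by simp [h0] at h
  have htne : t ≠ 0 := fun h0 => by simp [h0] at h
  have hs2 : 0 < s ^ 2 := by positivity
  have ht2 : 0 < t ^ 2 := by positivity
  have E : (Mi + c * b) * (Mk + c * a) = (b - c * a) * (a - c * b) := by
    have E0 : (Mi + c * b) * (Mk + c * a) * (s * t)
        = (b - c * a) * (a - c * b) * (s * t) := by
      linear_combination ((Mk + c * a) * t) * h1 + ((b - c * a) * t) * h2
    exact mul_right_cancel₀ (ne_of_lt h) E0
  rcases le_or_gt 0 c with hc | hc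
  · have hMib : 0 < Mi + c * b := by nlinarith
    have hMka : 0 < Mk + c * a := by nlinarith
    have k1 : (b - c * a) * t ^ 2 < 0 := h1t ▸ mul_neg_of_pos_of_neg hMib h
    have k2 : (a - c * b) * s ^ 2 < 0 := h2s ▸ mul_neg_of_pos_of_neg hMka h
    have hba : b - c * a < 0 := by nlinarith
    have hab : a - c * b < 0 := by nlinarith
    nlinarith [mul_pos (show (0:ℝ) < 1 - c by linarith)
      (show (0:ℝ) < a + b by linarith)]
  · have hbca : 0 < b - c * a := by nlinarith
    have habc : 0 < a - c * b := by nlinarith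
    have k1 : 0 < (b - c * a) * t ^ 2 := mul_pos hbca ht2
    have k2 : 0 < (a - c * b) * s ^ 2 := mul_pos habc hs2
    have hMib : Mi + c * b < 0 := by nlinarith
    have hMka : Mk + c * a < 0 := by nlinarith
    have p1 : -(Mi + c * b) < -c * b := by nlinarith
    have p2 : -(Mk + c * a) < -c * a := by nlinarith
    have q1 : -(Mi + c * b) * -(Mk + c * a) < (-c * b) * (-c * a) := by
      apply mul_lt_mul' (le_of_lt p1) p2 (by linarith) (by nlinarith)
    nlinarith [E, q1, mul_pos (show (0:ℝ) < a by linarith) (show (0:ℝ) < b by linarith),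
      mul_pos (mul_pos (show (0:ℝ) < -c by linarith) (show (0:ℝ) < a by linarith))
        (show (0:ℝ) < a by linarith),
      mul_pos (mul_pos (show (0:ℝ) < -c by linarith) (show (0:ℝ) < b by linarith))
        (show (0:ℝ) < b by linarith)]

/-- **Lemma 5.2** (electron–proton symmetric collision of ε-strong
electrodynamics): for scaled masses `M_i, M_k > 0` and `|ε| < 2`, solutions of the
symmetric Weierstrass–Erdmann conditions in the attractive case satisfy
`sinh φ_i · sinh φ_k ≥ 0`, i.e. the collision is sticky. -/
theorem ep_symmetric_collision_sticky
    (Mi Mk ε φi φk : ℝ) (hMi : 0 < Mi) (hMk : 0 < Mk) (hε : |ε| < 2)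
    (h1 : (Mi + ε / 2 * cosh φk) * sinh φi = (cosh φk - ε / 2 * cosh φi) * sinh φk)
    (h2 : (Mk + ε / 2 * cosh φi) * sinh φk = (cosh φi - ε / 2 * cosh φk) * sinh φi) :
    0 ≤ sinh φi * sinh φk := by
  obtain ⟨hεl, hεr⟩ := abs_lt.mp hε
  exact ep_aux Mi Mk (ε / 2) (cosh φi) (cosh φk) (sinh φi) (sinh φk)
    hMi hMk (by linarith) (by linarith) (Real.one_le_cosh φi) (Real.one_le_cosh φk)
    h1 h2
end

section
/- Let M_i, M_k > 0 and ε ∈ ℝ, and suppose φ_i, φ_k ∈ ℝ with sinh(φ_i)·sinh(φ_k) ≠ 0 satisfy (M_i + (ε/2)·cosh(φ_k))·sinh(φ_i) = (cosh(φ_k) − (ε/2)·cosh(φ_i))·sinh(φ_k) and (M_k + (ε/2)·cosh(φ_i))·sinh(φ_k) = (cosh(φ_i) − (ε/2)·cosh(φ_k))·sinh(φ_i). Then cosh(φ_i)·cosh(φ_k) = M_i·M_k + (ε/2)·(M_i·cosh(φ_i) + M_k·cosh(φ_k)) + (ε/2)·(cosh(φ_i)² + cosh(φ_k)²). -/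
open Real

/-- The vanishing-determinant condition from the proof of Lemma 5.2: a nontrivial
solution of the symmetric-collision equations of ε-strong electrodynamics
(attractive case) forces
`γ_i γ_k = M_i M_k + (ε/2)(M_i γ_i + M_k γ_k) + (ε/2)(γ_i² + γ_k²)`,
with `γ_α = cosh φ_α`. -/
theorem ep_symmetric_collision_determinant
    (Mi Mk ε φi φk : ℝ) (hMi : 0 < Mi) (hMk : 0 < Mk)
    (hnz : sinh φi * sinh φk ≠ 0)
    (h1 : (Mi + ε / 2 * cosh φk) * sinh φi = (cosh φk - ε / 2 * cosh φi) * sinh φk)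
    (h2 : (Mk + ε / 2 * cosh φi) * sinh φk = (cosh φi - ε / 2 * cosh φk) * sinh φi) :
    cosh φi * cosh φk =
      Mi * Mk + ε / 2 * (Mi * cosh φi + Mk * cosh φk) +
        ε / 2 * (cosh φi ^ 2 + cosh φk ^ 2) := by
  have key : ((Mi + ε / 2 * cosh φk) * (Mk + ε / 2 * cosh φi)) * (sinh φi * sinh φk)
      = ((cosh φk - ε / 2 * cosh φi) * (cosh φi - ε / 2 * cosh φk)) * (sinh φi * sinh φk) := by
    have := congrArg₂ (· * ·) h1 h2
    ring_nf
    ring_nf at this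
    linarith [this]
  have h := mul_right_cancel₀ hnz key
  nlinarith [h]
end

section
/- Let M_i, M_k > 0 and ε > 0, and suppose φ_i, φ_k ∈ ℝ with sinh(φ_k) ≠ 0 satisfy (M_i + (ε/2)·cosh(φ_k))·sinh(φ_i) = −(cosh(φ_k) + (ε/2)·cosh(φ_i))·sinh(φ_k) and (M_k + (ε/2)·cosh(φ_i))·sinh(φ_k) = −(cosh(φ_i) + (ε/2)·cosh(φ_k))·sinh(φ_i). Then sinh(φ_i)·sinh(φ_k) < 0 (the collision is a mutual recoil). -/
open Real

/-- **Lemma 5.3**, case `ε > 0` (electron–electron symmetric collision of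
ε-strong electrodynamics): for scaled masses `M_i, M_k > 0` and `ε > 0`,
nontrivial solutions of the symmetric Weierstrass–Erdmann conditions in the
repulsive case satisfy `sinh φ_i · sinh φ_k < 0`, i.e. the collision is a mutual
recoil. -/
theorem ee_symmetric_collision_recoil
    (Mi Mk ε φi φk : ℝ) (hMi : 0 < Mi) (hMk : 0 < Mk) (hε : 0 < ε)
    (hk : sinh φk ≠ 0)
    (h1 : (Mi + ε / 2 * cosh φk) * sinh φi = -(cosh φk + ε / 2 * cosh φi) * sinh φk)
    (h2 : (Mk + ε / 2 * cosh φi) * sinh φk = -(cosh φi + ε / 2 * cosh φk) * sinh φi) :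
    sinh φi * sinh φk < 0 := by
  have hci := cosh_pos (x := φi)
  have hck := cosh_pos (x := φk)
  have hA : 0 < Mi + ε / 2 * cosh φk := by positivity
  have hB : 0 < cosh φk + ε / 2 * cosh φi := by positivity
  have hk2 : 0 < sinh φk * sinh φk := mul_self_pos.mpr hk
  nlinarith [mul_pos hB hk2, congrArg (· * sinh φk) h1]
end
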